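/- Let G be a strict two-player finite game such that every 2×2 subgame of G is dominance-solvable (equivalently, in every 2×2 subgame some strategy is strictly dominated within that subgame). Then G is dominance-solvable. -/
import Mathlib

/-- Profiles differing only in player 1's strategy. -/
def IComp1 {A B : Type*} (p q : A × B) : Prop := p.1 ≠ q.1 ∧ p.2 = q.2

/-- Profiles differing only in player 2's strategy. -/
def IComp2 {A B : Type*} (p q : A × B) : Prop := p.1 = q.1 ∧ p.2 ≠ q.2

/-- A two-player game is strict if comparable profiles never give the deviating player
equal payoff. -/
def Strict2 {A B : Type*} (u1 u2 : A × B → ℝ) : Prop :=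
  (∀ p q, IComp1 p q → u1 p ≠ u1 q) ∧ (∀ p q, IComp2 p q → u2 p ≠ u2 q)

/-- Arc of the preference graph of a two-player game. -/
def Arc2 {A B : Type*} (u1 u2 : A × B → ℝ) (p q : A × B) : Prop :=
  (IComp1 p q ∧ u1 p < u1 q) ∨ (IComp2 p q ∧ u2 p < u2 q)

/-- A two-player game is zero-sum if the utilities sum to zero at every profile. -/
def ZeroSum2 {A B : Type*} (u1 u2 : A × B → ℝ) : Prop := ∀ p, u1 p + u2 p = 0

/-- One step of iterated deletion: from the subgame `T` delete a single strategy of one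
player that is strictly dominated within `T`, obtaining the subgame `T'`. -/
def DeletionStep {A B : Type*} [DecidableEq A] [DecidableEq B] (u1 u2 : A × B → ℝ)
    (T T' : Finset A × Finset B) : Prop :=
  (∃ t ∈ T.1, (∃ s ∈ T.1, ∀ r ∈ T.2, u1 (t, r) < u1 (s, r)) ∧
      T'.1 = T.1.erase t ∧ T'.2 = T.2) ∨
  (∃ t ∈ T.2, (∃ s ∈ T.2, ∀ r ∈ T.1, u2 (r, t) < u2 (r, s)) ∧
      T'.1 = T.1 ∧ T'.2 = T.2.erase t)

/-- A two-player finite game is dominance-solvable if some finite sequence of single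
deletions of strictly dominated strategies, starting from the full game, ends in a
subgame with exactly one profile. -/
def DominanceSolvable {A B : Type*} [Fintype A] [Fintype B] [DecidableEq A] [DecidableEq B]
    (u1 u2 : A × B → ℝ) : Prop :=
  ∃ T : Finset A × Finset B,
    Relation.ReflTransGen (DeletionStep u1 u2) (Finset.univ, Finset.univ) T ∧
      T.1.card = 1 ∧ T.2.card = 1

section Aux

/-- A maximal element for a transitive irreflexive relation on a nonempty finset. -/
private lemma exists_forall_not_rel {α : Type*} (r : α → α → Prop)
    (htrans : ∀ {x y z}, r x y → r y z → r x z) (hirr : ∀ x, ¬ r x x)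
    (s : Finset α) : s.Nonempty → ∃ M ∈ s, ∀ x ∈ s, ¬ r M x := by
  classical
  induction s using Finset.induction_on with
  | empty => intro h; simp at h
  | @insert a s ha IH =>
    intro _
    by_cases hsne : s.Nonempty
    · obtain ⟨M, hM, hMmax⟩ := IH hsne
      by_cases hr : r M a
      · refine ⟨a, Finset.mem_insert_self _ _, ?_⟩
        intro x hx
        rcases Finset.mem_insert.mp hx with rfl | hx
        · exact hirr x
        · intro hax; exact hMmax x hx (htrans hr hax)
      · refine ⟨M, Finset.mem_insert_of_mem hM, ?_⟩
        intro x hx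
        rcases Finset.mem_insert.mp hx with rfl | hx
        · exact hr
        · exact hMmax x hx
    · have hse : s = ∅ := Finset.not_nonempty_iff_eq_empty.mp hsne
      subst hse
      refine ⟨a, Finset.mem_insert_self _ _, ?_⟩
      intro x hx
      rcases Finset.mem_insert.mp hx with rfl | hx
      · exact hirr x
      · simp at hx

variable {A B : Type*} [DecidableEq A] [DecidableEq B] {u1 u2 : A × B → ℝ}

variable (h2x2 : ∀ a b : A, ∀ c d : B, a ≠ b → c ≠ d →
      (u1 (a, c) < u1 (b, c) ∧ u1 (a, d) < u1 (b, d)) ∨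
      (u1 (b, c) < u1 (a, c) ∧ u1 (b, d) < u1 (a, d)) ∨
      (u2 (a, c) < u2 (a, d) ∧ u2 (b, c) < u2 (b, d)) ∨
      (u2 (a, d) < u2 (a, c) ∧ u2 (b, d) < u2 (b, c)))

variable (hs : Strict2 u1 u2)

include h2x2

/-- If rows a,b are u1-misaligned on columns c,d, the columns are u2-aligned on those rows. -/
private lemma colAligned {a b : A} {c d : B} (hab : a ≠ b) (hcd : c ≠ d)
    (h1 : u1 (b, c) < u1 (a, c)) (h2 : u1 (a, d) < u1 (b, d)) :
    (u2 (a, c) < u2 (a, d) ∧ u2 (b, c) < u2 (b, d)) ∨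
    (u2 (a, d) < u2 (a, c) ∧ u2 (b, d) < u2 (b, c)) := by
  rcases h2x2 a b c d hab hcd with ⟨p, q⟩ | ⟨p, q⟩ | h | h
  · linarith
  · linarith
  · exact Or.inl h
  · exact Or.inr h

/-- If columns c,d are u2-misaligned on rows a,b, the rows are u1-aligned on those columns. -/
private lemma rowAligned {a b : A} {c d : B} (hab : a ≠ b) (hcd : c ≠ d)
    (g1 : u2 (a, d) < u2 (a, c)) (g2 : u2 (b, c) < u2 (b, d)) :
    (u1 (a, c) < u1 (b, c) ∧ u1 (a, d) < u1 (b, d)) ∨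
    (u1 (b, c) < u1 (a, c) ∧ u1 (b, d) < u1 (a, d)) := by
  rcases h2x2 a b c d hab hcd with h | h | ⟨p, q⟩ | ⟨p, q⟩
  · exact Or.inl h
  · exact Or.inr h
  · linarith
  · linarith

include hs

/-- Existence of a pure Nash equilibrium in every nonempty subgame. -/
private lemma exists_psne (T1 : Finset A) (T2 : Finset B)
    (h1 : T1.Nonempty) (h2 : T2.Nonempty) :
    ∃ a ∈ T1, ∃ d ∈ T2, (∀ x ∈ T1, x ≠ a → u1 (x, d) < u1 (a, d)) ∧
      (∀ y ∈ T2, y ≠ d → u2 (a, y) < u2 (a, d)) := by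
  classical
  have hbr1 : ∀ d : B, ∃ a, a ∈ T1 ∧ ∀ x ∈ T1, x ≠ a → u1 (x, d) < u1 (a, d) := by
    intro d
    obtain ⟨a, haT, hmax⟩ := T1.exists_max_image (fun x => u1 (x, d)) h1
    exact ⟨a, haT, fun x hx hne =>
      lt_of_le_of_ne (hmax x hx) (hs.1 (x, d) (a, d) ⟨hne, rfl⟩)⟩
  have hbr2 : ∀ a : A, ∃ d, d ∈ T2 ∧ ∀ y ∈ T2, y ≠ d → u2 (a, y) < u2 (a, d) := by
    intro a
    obtain ⟨d, hdT, hmax⟩ := T2.exists_max_image (fun y => u2 (a, y)) h2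
    exact ⟨d, hdT, fun y hy hne =>
      lt_of_le_of_ne (hmax y hy) (hs.2 (a, y) (a, d) ⟨rfl, hne⟩)⟩
  choose br1 hbr1T hbr1max using hbr1
  choose br2 hbr2T hbr2max using hbr2
  by_contra hno
  -- no fixed point of br2 ∘ br1
  have hfix : ∀ d ∈ T2, br2 (br1 d) ≠ d := by
    intro d hd heq
    refine hno ⟨br1 d, hbr1T d, d, hd, hbr1max d, ?_⟩
    intro y hy hyd
    have h := hbr2max (br1 d) y hy (by rw [heq]; exact hyd)
    rwa [heq] at h
  have hu1cross : ∀ {c e : B}, br1 e ≠ br1 c → u1 (br1 e, c) < u1 (br1 c, c) :=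
    fun {c e} hne => hbr1max c (br1 e) (hbr1T e) hne
  have htransfer : ∀ {c e : B}, c ≠ e →
      (u2 (br1 c, c) < u2 (br1 c, e) ↔ u2 (br1 e, c) < u2 (br1 e, e)) := by
    intro c e hce
    by_cases hbeq : br1 c = br1 e
    · rw [hbeq]
    · have h1 : u1 (br1 e, c) < u1 (br1 c, c) := hu1cross (Ne.symm hbeq)
      have h2 : u1 (br1 c, e) < u1 (br1 e, e) := hu1cross hbeq
      rcases colAligned h2x2 hbeq hce h1 h2 with ⟨p, q⟩ | ⟨p, q⟩
      · exact ⟨fun _ => q, fun _ => p⟩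
      · constructor
        · intro h; linarith
        · intro h; linarith
  have htrans : ∀ {c e f : B}, u2 (br1 c, c) < u2 (br1 c, e) →
      u2 (br1 e, e) < u2 (br1 e, f) → u2 (br1 c, c) < u2 (br1 c, f) := by
    intro c e f hce hef
    have hcne : c ≠ e := by rintro rfl; exact lt_irrefl _ hce
    have henf : e ≠ f := by rintro rfl; exact lt_irrefl _ hef
    by_cases hcf : c = f
    · exfalso
      subst hcf
      have h' := (htransfer hcne).mp hce
      exact lt_asymm h' hef
    · by_contra hn
      have hn' : u2 (br1 c, f) < u2 (br1 c, c) :=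
        ((hs.2 (br1 c, c) (br1 c, f) ⟨rfl, hcf⟩).lt_or_gt).resolve_left hn
      by_cases hab : br1 c = br1 e
      · have hef' : u2 (br1 c, e) < u2 (br1 c, f) := by rw [hab]; exact hef
        linarith
      · have step1 : u2 (br1 e, c) < u2 (br1 e, e) := (htransfer hcne).mp hce
        have hu1c : u1 (br1 e, c) < u1 (br1 c, c) := hu1cross (Ne.symm hab)
        have hu1e : u1 (br1 c, e) < u1 (br1 e, e) := hu1cross hab
        have t1 : u1 (br1 c, f) < u1 (br1 e, f) := by
          rcases rowAligned h2x2 hab henf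
            (show u2 (br1 c, f) < u2 (br1 c, e) by linarith) hef with ⟨p, q⟩ | ⟨p, q⟩
          · exact q
          · linarith
        rcases rowAligned h2x2 hab hcf hn'
          (show u2 (br1 e, c) < u2 (br1 e, f) by linarith) with ⟨p, q⟩ | ⟨p, q⟩
        · linarith
        · linarith
  obtain ⟨M, hMT, hMmax⟩ := exists_forall_not_rel
    (fun c e => u2 (br1 c, c) < u2 (br1 c, e))
    (fun hxy hyz => htrans hxy hyz) (fun x => lt_irrefl _) T2 h2
  have hgM : br2 (br1 M) ∈ T2 := hbr2T (br1 M)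
  have hMr : u2 (br1 M, M) < u2 (br1 M, br2 (br1 M)) :=
    hbr2max (br1 M) M hMT (Ne.symm (hfix M hMT))
  exact hMmax _ hgM hMr

/-- At a PSNE (a,d): the worst row at d is dominated by a, or the worst column for a is
dominated by d. -/
private lemma kprime (T1 : Finset A) (T2 : Finset B) {a b : A} {d e : B}
    (haT : a ∈ T1) (hdT : d ∈ T2) (hbT : b ∈ T1) (heT : e ∈ T2)
    (hP : ∀ x ∈ T1, x ≠ a → u1 (x, d) < u1 (a, d))
    (hQ : ∀ y ∈ T2, y ≠ d → u2 (a, y) < u2 (a, d))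
    (hbmin : ∀ x ∈ T1, x ≠ b → u1 (b, d) < u1 (x, d))
    (hemin : ∀ y ∈ T2, y ≠ e → u2 (a, e) < u2 (a, y))
    (hab : a ≠ b) (hde : d ≠ e) :
    (∀ y ∈ T2, u1 (b, y) < u1 (a, y)) ∨ (∀ x ∈ T1, u2 (x, e) < u2 (x, d)) := by
  by_contra hcon
  push_neg at hcon
  obtain ⟨⟨y, hyT, hy⟩, ⟨x, hxT, hx⟩⟩ := hcon
  have A1 : u1 (b, d) < u1 (a, d) := hbmin a haT hab
  have B1 : u2 (a, e) < u2 (a, d) := hQ e heT (Ne.symm hde)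
  have C1 : u1 (a, y) < u1 (b, y) :=
    lt_of_le_of_ne hy (hs.1 (a, y) (b, y) ⟨hab, rfl⟩)
  have C2 : u2 (x, d) < u2 (x, e) :=
    lt_of_le_of_ne hx (hs.2 (x, d) (x, e) ⟨rfl, hde⟩)
  have hyd : y ≠ d := by rintro rfl; linarith
  have hxa : x ≠ a := by rintro rfl; linarith
  have A2 : u1 (x, d) < u1 (a, d) := hP x hxT hxa
  have B2 : u2 (a, y) < u2 (a, d) := hQ y hyT hyd
  have s1 : u2 (b, y) < u2 (b, d) := by
    rcases colAligned h2x2 hab (Ne.symm hyd) A1 C1 with ⟨p, q⟩ | ⟨p, q⟩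
    · linarith
    · exact q
  have s2 : u1 (x, e) < u1 (a, e) := by
    rcases rowAligned h2x2 (Ne.symm hxa) hde B1 C2 with ⟨p, q⟩ | ⟨p, q⟩
    · linarith
    · exact q
  by_cases hxb : x = b
  · subst hxb
    by_cases hye : y = e
    · subst hye; linarith
    · have B3 : u2 (a, e) < u2 (a, y) := hemin y hyT hye
      have t7 : u1 (a, e) < u1 (x, e) := by
        rcases rowAligned h2x2 hab hye B3
          (show u2 (x, y) < u2 (x, e) by linarith) with ⟨p, q⟩ | ⟨p, q⟩
        · exact q
        · linarith
      linarith
  · have A3 : u1 (b, d) < u1 (x, d) := hbmin x hxT hxb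
    by_cases hye : y = e
    · subst hye
      have t9 : u1 (b, y) < u1 (x, y) := by
        rcases rowAligned h2x2 (show b ≠ x from Ne.symm hxb) hde s1 C2 with ⟨p, q⟩ | ⟨p, q⟩
        · exact q
        · linarith
      linarith
    · have B3 : u2 (a, e) < u2 (a, y) := hemin y hyT hye
      rcases (hs.2 (b, e) (b, y) ⟨rfl, Ne.symm hye⟩).lt_or_gt with hi | hii
      · -- case (i): u2 (b,e) < u2 (b,y)
        have t1 : u2 (b, e) < u2 (b, d) := by linarith
        have t2 : u1 (b, e) < u1 (x, e) := by
          rcases rowAligned h2x2 (show b ≠ x from Ne.symm hxb) hde t1 C2 with ⟨p, q⟩ | ⟨p, q⟩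
          · exact q
          · linarith
        have D1 : u1 (x, y) < u1 (a, y) ∨ u2 (x, y) < u2 (x, d) := by
          rcases h2x2 a x d y (Ne.symm hxa) (Ne.symm hyd) with ⟨p, q⟩ | ⟨p, q⟩ | ⟨p, q⟩ | ⟨p, q⟩
          · linarith
          · exact Or.inl q
          · linarith
          · exact Or.inr q
        have D2 : u1 (b, y) < u1 (x, y) ∨ u2 (x, y) < u2 (x, d) := by
          rcases h2x2 b x d y (Ne.symm hxb) (Ne.symm hyd) with ⟨p, q⟩ | ⟨p, q⟩ | ⟨p, q⟩ | ⟨p, q⟩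
          · exact Or.inl q
          · linarith
          · linarith
          · exact Or.inr q
        have t3 : u2 (x, y) < u2 (x, d) := by
          rcases D1 with h1 | h1
          · rcases D2 with h2 | h2
            · linarith
            · exact h2
          · exact h1
        have t5 : u1 (x, y) < u1 (a, y) := by
          rcases rowAligned h2x2 (show a ≠ x from Ne.symm hxa) (show y ≠ e from hye) B3
            (show u2 (x, y) < u2 (x, e) by linarith) with ⟨p, q⟩ | ⟨p, q⟩
          · linarith
          · exact p
        have t6 : u1 (b, y) < u1 (x, y) := by
          rcases rowAligned h2x2 (show b ≠ x from Ne.symm hxb) (show y ≠ e from hye) hi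
            (show u2 (x, y) < u2 (x, e) by linarith) with ⟨p, q⟩ | ⟨p, q⟩
          · exact p
          · linarith
        linarith
      · -- case (ii): u2 (b,y) < u2 (b,e)
        have t7 : u1 (a, e) < u1 (b, e) := by
          rcases rowAligned h2x2 hab hye B3 hii with ⟨p, q⟩ | ⟨p, q⟩
          · exact q
          · linarith
        have t8 : u2 (b, e) < u2 (b, d) := by
          rcases colAligned h2x2 hab hde A1 t7 with ⟨p, q⟩ | ⟨p, q⟩
          · linarith
          · exact q
        have t9 : u1 (b, e) < u1 (x, e) := by
          rcases rowAligned h2x2 (show b ≠ x from Ne.symm hxb) hde t8 C2 with ⟨p, q⟩ | ⟨p, q⟩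
          · exact q
          · linarith
        linarith

private lemma exists_deletion (T1 : Finset A) (T2 : Finset B)
    (h1 : T1.Nonempty) (h2 : T2.Nonempty) (hbig : 1 < T1.card ∨ 1 < T2.card) :
    ∃ T' : Finset A × Finset B, DeletionStep u1 u2 (T1, T2) T' ∧
      T'.1.Nonempty ∧ T'.2.Nonempty ∧ T'.1.card + T'.2.card < T1.card + T2.card := by
  classical
  obtain ⟨a, haT, d, hdT, hP, hQ⟩ := exists_psne h2x2 hs T1 T2 h1 h2
  by_cases h1c : 1 < T1.card
  · -- worst row at d
    obtain ⟨b, hbT, hbmin'⟩ := T1.exists_min_image (fun x => u1 (x, d)) h1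
    have hbmin : ∀ x ∈ T1, x ≠ b → u1 (b, d) < u1 (x, d) := fun x hx hne =>
      lt_of_le_of_ne (hbmin' x hx) (hs.1 (b, d) (x, d) ⟨Ne.symm hne, rfl⟩)
    have hab : a ≠ b := by
      rintro rfl
      obtain ⟨z, hz, hza⟩ := Finset.exists_mem_ne h1c a
      have h1' := hP z hz hza
      have h2' := hbmin z hz hza
      linarith
    have hdomrow : (∀ y ∈ T2, u1 (b, y) < u1 (a, y)) →
        ∃ T' : Finset A × Finset B, DeletionStep u1 u2 (T1, T2) T' ∧
          T'.1.Nonempty ∧ T'.2.Nonempty ∧ T'.1.card + T'.2.card < T1.card + T2.card := by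
      intro hdom
      refine ⟨(T1.erase b, T2), Or.inl ⟨b, hbT, ⟨a, haT, hdom⟩, rfl, rfl⟩,
        ⟨a, Finset.mem_erase.mpr ⟨hab, haT⟩⟩, h2, ?_⟩
      have hc := Finset.card_erase_of_mem hbT
      have hpos : 0 < T1.card := Finset.card_pos.mpr h1
      simp only [hc]
      omega
    by_cases h2c : 1 < T2.card
    · -- worst column for a
      obtain ⟨e, heT, hemin'⟩ := T2.exists_min_image (fun y => u2 (a, y)) h2
      have hemin : ∀ y ∈ T2, y ≠ e → u2 (a, e) < u2 (a, y) := fun y hy hne =>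
        lt_of_le_of_ne (hemin' y hy) (hs.2 (a, e) (a, y) ⟨rfl, Ne.symm hne⟩)
      have hde : d ≠ e := by
        rintro rfl
        obtain ⟨z, hz, hzd⟩ := Finset.exists_mem_ne h2c d
        have h1' := hQ z hz hzd
        have h2' := hemin z hz hzd
        linarith
      rcases kprime h2x2 hs T1 T2 haT hdT hbT heT hP hQ hbmin hemin hab hde with hrow | hcol
      · exact hdomrow hrow
      · refine ⟨(T1, T2.erase e), Or.inr ⟨e, heT, ⟨d, hdT, fun r hr => hcol r hr⟩, rfl, rfl⟩,
          h1, ⟨d, Finset.mem_erase.mpr ⟨hde, hdT⟩⟩, ?_⟩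
        have hc := Finset.card_erase_of_mem heT
        have hpos : 0 < T2.card := Finset.card_pos.mpr h2
        simp only [hc]
        omega
    · -- T2 is a singleton {d}
      have hT2 : ∀ r ∈ T2, r = d := by
        have hcard : T2.card = 1 := by
          have hpos : 0 < T2.card := Finset.card_pos.mpr h2; omega
        obtain ⟨z, hz⟩ := Finset.card_eq_one.mp hcard
        intro r hr
        rw [hz] at hr hdT
        simp only [Finset.mem_singleton] at hr hdT
        rw [hr, hdT]
      apply hdomrow
      intro y hyT
      rw [hT2 y hyT]
      exact hbmin a haT hab
  · have h2c : 1 < T2.card := hbig.resolve_left h1c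
    -- T1 is a singleton {a}; delete the worst column for a
    have hT1 : ∀ r ∈ T1, r = a := by
      have hcard : T1.card = 1 := by
        have hpos : 0 < T1.card := Finset.card_pos.mpr h1; omega
      obtain ⟨z, hz⟩ := Finset.card_eq_one.mp hcard
      intro r hr
      rw [hz] at hr haT
      simp only [Finset.mem_singleton] at hr haT
      rw [hr, haT]
    obtain ⟨e, heT, hed⟩ := Finset.exists_mem_ne h2c d
    refine ⟨(T1, T2.erase e), Or.inr ⟨e, heT, ⟨d, hdT, ?_⟩, rfl, rfl⟩,
      h1, ⟨d, Finset.mem_erase.mpr ⟨Ne.symm hed, hdT⟩⟩, ?_⟩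
    · intro r hr
      rw [hT1 r hr]
      exact hQ e heT hed
    · have hc := Finset.card_erase_of_mem heT
      have hpos : 0 < T2.card := Finset.card_pos.mpr h2
      simp only [hc]
      omega

private lemma solve : ∀ n : ℕ, ∀ T : Finset A × Finset B, T.1.Nonempty → T.2.Nonempty →
    T.1.card + T.2.card ≤ n →
    ∃ S, Relation.ReflTransGen (DeletionStep u1 u2) T S ∧ S.1.card = 1 ∧ S.2.card = 1 := by
  intro n
  induction n with
  | zero =>
    intro T h1 h2 hn
    have hpos : 0 < T.1.card := Finset.card_pos.mpr h1
    omega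
  | succ n IH =>
    rintro ⟨T1, T2⟩ h1 h2 hn
    by_cases hc : T1.card = 1 ∧ T2.card = 1
    · exact ⟨(T1, T2), Relation.ReflTransGen.refl, hc.1, hc.2⟩
    · have hbig : 1 < T1.card ∨ 1 < T2.card := by
        have e1 : 0 < T1.card := Finset.card_pos.mpr h1
        have e2 : 0 < T2.card := Finset.card_pos.mpr h2
        omega
      obtain ⟨T', hstep, h1', h2', hlt⟩ := exists_deletion h2x2 hs T1 T2 h1 h2 hbig
      have hn' : T1.card + T2.card ≤ n + 1 := hn
      obtain ⟨S, hrt, hS⟩ := IH T' h1' h2' (by omega)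
      exact ⟨S, Relation.ReflTransGen.head hstep hrt, hS⟩

end Aux

/-- If every 2×2 subgame of a strict two-player finite game is dominance-solvable
(i.e. in every 2×2 subgame some strategy is strictly dominated within that subgame),
then the game is dominance-solvable. -/
theorem dominance_solvable_of_2x2_dominance_solvable {A B : Type*}
    [Fintype A] [Fintype B] [DecidableEq A] [DecidableEq B] [Nonempty A] [Nonempty B]
    (u1 u2 : A × B → ℝ) (hs : Strict2 u1 u2)
    (h2x2 : ∀ a b : A, ∀ c d : B, a ≠ b → c ≠ d →
      (u1 (a, c) < u1 (b, c) ∧ u1 (a, d) < u1 (b, d)) ∨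
      (u1 (b, c) < u1 (a, c) ∧ u1 (b, d) < u1 (a, d)) ∨
      (u2 (a, c) < u2 (a, d) ∧ u2 (b, c) < u2 (b, d)) ∨
      (u2 (a, d) < u2 (a, c) ∧ u2 (b, d) < u2 (b, c))) :
    DominanceSolvable u1 u2 := by
  obtain ⟨S, hrt, hS⟩ := solve h2x2 hs
    ((Finset.univ : Finset A).card + (Finset.univ : Finset B).card)
    (Finset.univ, Finset.univ) Finset.univ_nonempty Finset.univ_nonempty le_rfl
  exact ⟨S, hrt, hS⟩
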